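/- Let G be 2-edge-connected with 2-edge-cut {e1,e2} as above, and let C = {f1,f2,(u1,v1)} be an edge cut of G1 + (u1,v1) containing the added edge (u1,v1) (possibly f2 absent). Then {f1,f2,e1} is an edge cut of G. -/
import Mathlib


/-- A finite undirected multigraph: each edge `e` has two (not necessarily distinct)
endpoints `fst e` and `snd e`. -/
structure MGraph (V E : Type*) where
  fst : E → V
  snd : E → V

namespace MGraph

variable {V E : Type*}

/-- `cut G S` is `δ(S)`, the set of edges with exactly one endpoint in `S`. -/
def cut (G : MGraph V E) (S : Set V) : Set E :=
  {e | (G.fst e ∈ S) ↔ (G.snd e ∉ S)}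

/-- One step along an edge of `A`. -/
def Step (G : MGraph V E) (A : Set E) (u v : V) : Prop :=
  ∃ e ∈ A, (G.fst e = u ∧ G.snd e = v) ∨ (G.fst e = v ∧ G.snd e = u)

/-- `u` and `v` are connected using only edges from `A`. -/
def Reach (G : MGraph V E) (A : Set E) (u v : V) : Prop :=
  Relation.ReflTransGen (G.Step A) u v

/-- The spanning subgraph `(V, A)` is connected. -/
def ConnectedOn (G : MGraph V E) (A : Set E) : Prop :=
  ∀ u v : V, G.Reach A u v

/-- The subgraph induced on the vertex set `W`, using only edges of `A` with both
endpoints in `W`, is connected. -/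
def InducedConnected (G : MGraph V E) (A : Set E) (W : Set V) : Prop :=
  ∀ u ∈ W, ∀ v ∈ W, G.Reach {e | e ∈ A ∧ G.fst e ∈ W ∧ G.snd e ∈ W} u v

/-- `s` and `t` are `p`-edge-connected in the spanning subgraph `(V, A)`:
every edge cut separating them has at least `p` edges. -/
def EdgeConnected (G : MGraph V E) (A : Set E) (p : ℕ) (s t : V) : Prop :=
  ∀ S : Set V, s ∈ S → t ∉ S → p ≤ (G.cut S ∩ A).ncard

/-- `S` separates the terminal pair `st`: exactly one of the two terminals lies in `S`. -/
def Separates (S : Set V) (st : V × V) : Prop := (st.1 ∈ S) ↔ (st.2 ∉ S)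

/-- `G` is 2-edge-connected: connected, and still connected after removing any single edge. -/
def TwoEdgeConnected (G : MGraph V E) : Prop :=
  G.ConnectedOn Set.univ ∧ ∀ e : E, G.ConnectedOn {e}ᶜ

/-- `G` is 3-edge-connected: connected, and still connected after removing any two edges. -/
def ThreeEdgeConnected (G : MGraph V E) : Prop :=
  G.ConnectedOn Set.univ ∧ ∀ e f : E, G.ConnectedOn ({e, f} : Set E)ᶜ

/-- `C` is a 2-edge-cut of a 2-edge-connected graph `G`. -/
def TwoEdgeCut (G : MGraph V E) (C : Set E) : Prop :=
  C.ncard = 2 ∧ ¬ G.ConnectedOn Cᶜ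

/-- The subgraph of `G` induced on `W` is 2-edge-connected. -/
def InducedTwoEdgeConnected (G : MGraph V E) (W : Set V) : Prop :=
  G.InducedConnected Set.univ W ∧
    ∀ f : E, G.fst f ∈ W → G.snd f ∈ W → G.InducedConnected {f}ᶜ W

end MGraph

/-- with `{e1,e2}` a 2-edge-cut of the 2-edge-connected multigraph `G`
splitting it into sides `V1 ∋ u1, v1` and `V2 ∋ u2, v2`, if `{f1, f2, (u1,v1)}` is an
edge cut of `G1 + (u1,v1)` containing the added edge (witnessed by `S ⊆ V1` separating
`u1` from `v1` whose boundary inside `V1` is exactly `{f1, f2}`; `f1 = f2` is allowed,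
covering the case that `f2` is absent), then `{f1, f2, e1}` is an edge cut of `G`. -/
theorem stmt13 {V E : Type*} [Fintype V] [Fintype E] (G : MGraph V E)
    (h2ec : G.TwoEdgeConnected)
    (e1 e2 : E) (hne : e1 ≠ e2)
    (u1 u2 v1 v2 : V)
    (he1 : G.fst e1 = u1 ∧ G.snd e1 = u2) (he2 : G.fst e2 = v1 ∧ G.snd e2 = v2)
    (hdisconn : ¬ G.ConnectedOn ({e1, e2} : Set E)ᶜ)
    (V1 V2 : Set V) (hpart : V1 ∪ V2 = Set.univ) (hdisj : Disjoint V1 V2)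
    (hu1 : u1 ∈ V1) (hv1 : v1 ∈ V1) (hu2 : u2 ∈ V2) (hv2 : v2 ∈ V2)
    (hcross : ∀ e : E, e ≠ e1 → e ≠ e2 → ((G.fst e ∈ V1) ↔ (G.snd e ∈ V1)))
    (hG1conn : G.InducedConnected ({e1, e2} : Set E)ᶜ V1)
    (hG2conn : G.InducedConnected ({e1, e2} : Set E)ᶜ V2)
    (f1 f2 : E)
    (hf1 : G.fst f1 ∈ V1 ∧ G.snd f1 ∈ V1) (hf2 : G.fst f2 ∈ V1 ∧ G.snd f2 ∈ V1)
    (hcut : ∃ S : Set V, S ⊆ V1 ∧ u1 ∈ S ∧ v1 ∈ V1 \ S ∧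
      ∀ e : E, (G.fst e ∈ V1 ∧ G.snd e ∈ V1) →
        (((G.fst e ∈ S) ↔ (G.snd e ∉ S)) ↔ (e = f1 ∨ e = f2))) :
    ∃ S' : Set V, S'.Nonempty ∧ S'ᶜ.Nonempty ∧
      G.cut S' = {f1, f2, e1} := by
  obtain ⟨S, hSV1, hu1S, hv1S, hSboundary⟩ := hcut
  have hnotV1 : ∀ x : V, x ∈ V2 → x ∉ V1 := fun x hx hx1 =>
    Set.disjoint_left.mp hdisj hx1 hx
  have hV1orV2 : ∀ x : V, x ∈ V1 ∨ x ∈ V2 := by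
    intro x
    have := Set.mem_univ x
    rw [← hpart] at this
    exact this
  refine ⟨S, ⟨u1, hu1S⟩, ⟨v1, hv1S.2⟩, ?_⟩
  ext e
  simp only [MGraph.cut, Set.mem_setOf_eq, Set.mem_insert_iff, Set.mem_singleton_iff]
  constructor
  · intro he
    by_cases h1 : e = e1
    · tauto
    by_cases h2 : e = e2
    · exfalso
      subst h2
      rw [he2.1, he2.2] at he
      have : v1 ∉ S := hv1S.2
      have : v2 ∉ S := fun h => hnotV1 v2 hv2 (hSV1 h)
      tauto
    · have hcr := hcross e h1 h2
      rcases hV1orV2 (G.fst e) with hf | hf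
      · have hs : G.snd e ∈ V1 := hcr.mp hf
        have := (hSboundary e ⟨hf, hs⟩).mp he
        tauto
      · exfalso
        have hfn : G.fst e ∉ V1 := hnotV1 _ hf
        have hsn : G.snd e ∉ V1 := fun h => hfn (hcr.mpr h)
        have : G.fst e ∉ S := fun h => hfn (hSV1 h)
        have : G.snd e ∉ S := fun h => hsn (hSV1 h)
        tauto
  · intro he
    rcases he with h | h | h
    · exact (hSboundary e (h ▸ hf1)).mpr (Or.inl h)
    · exact (hSboundary e (h ▸ hf2)).mpr (Or.inr h)
    · subst h
      rw [he1.1, he1.2]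
      have : u2 ∉ S := fun h => hnotV1 u2 hu2 (hSV1 h)
      tauto
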